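/- Let f ∈ ℤ[z_1, …, z_n] be a symmetric polynomial that is homogeneous of degree k, let d ≥ 1 be an integer with d dividing n but d not dividing k, and let ω ∈ ℂ be a primitive d-th root of unity. Then f(1, ω, ω^2, …, ω^(n−1)) = 0. -/

import Mathlib

open MvPolynomial

lemma aux_smul_eval {n k : ℕ} (f : MvPolynomial (Fin n) ℤ) (hhom : f.IsHomogeneous k)
    (c : ℂ) (v : Fin n → ℂ) :
    MvPolynomial.aeval (fun i => c * v i) f = c ^ k * MvPolynomial.aeval v f := by
  rw [aeval_def, aeval_def, eval₂_eq, eval₂_eq, Finset.mul_sum]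
  apply Finset.sum_congr rfl
  intro d hd
  have hdeg : ∑ i, d i = k := by
    by_contra h
    apply mem_support_iff.mp hd
    apply hhom.coeff_eq_zero
    rwa [Finsupp.degree_apply, Finset.sum_subset (Finset.subset_univ d.support)
      (fun x _ hx => Finsupp.notMem_support_iff.mp hx)]
  have hsup : ∑ i ∈ d.support, d i = ∑ i, d i :=
    Finset.sum_subset (Finset.subset_univ d.support)
      (fun x _ hx => Finsupp.notMem_support_iff.mp hx)
  rw [← hdeg]
  simp only [mul_pow]
  rw [Finset.prod_mul_distrib, Finset.prod_pow_eq_pow_sum, hsup]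
  ring

/-- **Observation (vanishing of homogeneous specializations, part a).**
If `f ∈ ℤ[z_1, …, z_n]` is symmetric and homogeneous of degree `k`, `d ∣ n`, `d ∤ k`, and
`ω` is a primitive `d`th root of unity, then `f(1, ω, …, ω^(n-1)) = 0`. -/
theorem stmt_12 (n d k : ℕ) (hd : 1 ≤ d) (hdn : d ∣ n) (hdk : ¬ d ∣ k)
    (f : MvPolynomial (Fin n) ℤ) (hf : f.IsSymmetric) (hhom : f.IsHomogeneous k)
    (ω : ℂ) (hω : IsPrimitiveRoot ω d) :
    MvPolynomial.aeval (fun i : Fin n => ω ^ (i : ℕ)) f = 0 := by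
  set v : Fin n → ℂ := fun i => ω ^ (i : ℕ) with hv
  have hωn : ω ^ n = 1 := by
    obtain ⟨m, rfl⟩ := hdn
    rw [pow_mul, hω.pow_eq_one, one_pow]
  have key : (fun i : Fin n => ω * v i) = v ∘ (finRotate n) := by
    cases n with
    | zero => funext i; exact i.elim0
    | succ m =>
      funext i
      simp only [Function.comp, hv, finRotate_succ_apply, Fin.add_def, Fin.val_one']
      rw [← pow_eq_pow_mod _ hωn, pow_add, ← pow_eq_pow_mod _ hωn, pow_one, mul_comm]
  have h1 : ω ^ k * MvPolynomial.aeval v f = MvPolynomial.aeval v f := by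
    rw [← aux_smul_eval f hhom ω v, key, ← aeval_rename, hf (finRotate n)]
  have h2 : ω ^ k ≠ 1 := fun h => hdk ((hω.pow_eq_one_iff_dvd k).mp h)
  have := sub_eq_zero.mpr h1
  rw [← sub_one_mul] at this
  rcases mul_eq_zero.mp this with h | h
  · exact absurd (sub_eq_zero.mp h) h2
  · exact h
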